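/- For every integer w ≥ 1, the number of ternary (n = 3) operator monomials of weight w and multiplicity w−1 equals the tetrahedral number C(w+2, 3), where C(·,·) denotes the binomial coefficient. (Equivalently, in the notation N_n(w,m) for the number of n-ary operator monomials of weight w and multiplicity m, one has N_3(w, w−1) = C(w+2, 3), giving the values 1, 4, 10, 20, 35, … .) -/

import Mathlib

mutual
/-- An atom of an `n`-ary operator monomial: either the indeterminate symbol `∗`
or `L(M)` for an operator monomial `M`. -/
inductive OpAtom (n : ℕ) : Type
  | star : OpAtom n
  | op : OpMon n → OpAtom n

/-- A vector of `k` atoms. -/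
inductive OpAtomVec (n : ℕ) : ℕ → Type
  | nil : OpAtomVec n 0
  | cons : {k : ℕ} → OpAtom n → OpAtomVec n k → OpAtomVec n (k + 1)

/-- An `n`-ary operator monomial (in flattened normal form with respect to `n`-ary
associativity): a nonempty list of atoms whose length is congruent to `1` modulo `n-1`. -/
inductive OpMon (n : ℕ) : Type
  | mk : (k : ℕ) → 1 ≤ k → k % (n - 1) = 1 % (n - 1) → OpAtomVec n k → OpMon n
end

mutual
/-- Weight (total number of operations) of an atom. -/
def OpAtom.weight {n : ℕ} : OpAtom n → ℕ
  | .star => 0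
  | .op m => 1 + m.weight

/-- Sum of the weights of a vector of atoms. -/
def OpAtomVec.weight {n : ℕ} : {k : ℕ} → OpAtomVec n k → ℕ
  | _, .nil => 0
  | _, .cons a v => a.weight + v.weight

/-- Weight of an operator monomial `[A_1, …, A_k]`: the number `(k-1)/(n-1)` of `n`-ary
products needed to form a product of `k` factors, plus the weights of the atoms. -/
def OpMon.weight {n : ℕ} : OpMon n → ℕ
  | .mk k _ _ v => (k - 1) / (n - 1) + v.weight
end

mutual
/-- Multiplicity (number of occurrences of the operator symbol `L`) of an atom. -/
def OpAtom.mult {n : ℕ} : OpAtom n → ℕ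
  | .star => 0
  | .op m => 1 + m.mult

/-- Total multiplicity of a vector of atoms. -/
def OpAtomVec.mult {n : ℕ} : {k : ℕ} → OpAtomVec n k → ℕ
  | _, .nil => 0
  | _, .cons a v => a.mult + v.mult

/-- Multiplicity of an operator monomial. -/
def OpMon.mult {n : ℕ} : OpMon n → ℕ
  | .mk _ _ _ v => v.mult
end

mutual
/-- Degree (number of occurrences of the indeterminate `∗`) of an atom. -/
def OpAtom.degree {n : ℕ} : OpAtom n → ℕ
  | .star => 1
  | .op m => m.degree

/-- Total degree of a vector of atoms. -/
def OpAtomVec.degree {n : ℕ} : {k : ℕ} → OpAtomVec n k → ℕ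
  | _, .nil => 0
  | _, .cons a v => a.degree + v.degree

/-- Degree of an operator monomial. -/
def OpMon.degree {n : ℕ} : OpMon n → ℕ
  | .mk _ _ _ v => v.degree
end


namespace Stmt12

/-- Singleton monomial. -/
def single (a : OpAtom 3) : OpMon 3 := .mk 1 le_rfl rfl (.cons a .nil)

/-- Triple monomial. -/
def triple (a b c : OpAtom 3) : OpMon 3 :=
  .mk 3 (by norm_num) rfl (.cons a (.cons b (.cons c .nil)))

/-- Chain atom `L^j(∗)`. -/
def chainA : ℕ → OpAtom 3
  | 0 => .star
  | j + 1 => .op (single (chainA j))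

/-- Wrap a monomial `t` times with `L` and a singleton. -/
def wrap : ℕ → OpMon 3 → OpMon 3
  | 0, M => M
  | t + 1, M => single (.op (wrap t M))

/-- Encoding of tuples as monomials with exactly one ternary product. -/
def enc (t a b c : ℕ) : OpMon 3 := wrap t (triple (chainA a) (chainA b) (chainA c))

mutual
/-- Product count of an atom. -/
def OpAtom.pc : OpAtom 3 → ℕ
  | .star => 0
  | .op m => OpMon.pc m

/-- Product count of a vector. -/
def OpAtomVec.pc : {k : ℕ} → OpAtomVec 3 k → ℕ
  | _, .nil => 0
  | _, .cons a v => OpAtom.pc a + OpAtomVec.pc v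

/-- Product count of a monomial. -/
def OpMon.pc : OpMon 3 → ℕ
  | .mk k _ _ v => (k - 1) / 2 + OpAtomVec.pc v
end

mutual
theorem atom_weight_eq : ∀ A : OpAtom 3, A.weight = A.mult + OpAtom.pc A
  | .star => rfl
  | .op m => by
    have := mon_weight_eq m
    simp only [OpAtom.weight, OpAtom.mult, OpAtom.pc]
    omega

theorem vec_weight_eq : ∀ {k : ℕ} (v : OpAtomVec 3 k), v.weight = v.mult + OpAtomVec.pc v
  | _, .nil => rfl
  | _, .cons a v => by
    have h1 := atom_weight_eq a
    have h2 := vec_weight_eq v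
    simp only [OpAtomVec.weight, OpAtomVec.mult, OpAtomVec.pc]
    omega

theorem mon_weight_eq : ∀ M : OpMon 3, M.weight = M.mult + OpMon.pc M
  | .mk k h1 h2 v => by
    have := vec_weight_eq v
    simp only [OpMon.weight, OpMon.mult, OpMon.pc]
    omega
end

end Stmt12

namespace Stmt12

theorem single_weight (a : OpAtom 3) : (single a).weight = a.weight := by
  simp [single, OpMon.weight, OpAtomVec.weight]

theorem single_mult (a : OpAtom 3) : (single a).mult = a.mult := by
  simp [single, OpMon.mult, OpAtomVec.mult]

theorem chainA_weight : ∀ j, (chainA j).weight = j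
  | 0 => rfl
  | j + 1 => by
    simp [chainA, OpAtom.weight, single_weight, chainA_weight j]
    omega

theorem chainA_mult : ∀ j, (chainA j).mult = j
  | 0 => rfl
  | j + 1 => by
    simp [chainA, OpAtom.mult, single_mult, chainA_mult j]
    omega

theorem triple_mult (a b c : OpAtom 3) : (triple a b c).mult = a.mult + b.mult + c.mult := by
  simp [triple, OpMon.mult, OpAtomVec.mult]
  ring

theorem wrap_mult : ∀ t (M : OpMon 3), (wrap t M).mult = t + M.mult
  | 0, M => by simp [wrap]
  | t + 1, M => by
    simp [wrap, single_mult, OpAtom.mult, wrap_mult t M]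
    omega

theorem enc_mult (t a b c : ℕ) : (enc t a b c).mult = t + a + b + c := by
  simp [enc, wrap_mult, triple_mult, chainA_mult]
  ring

theorem triple_pc (a b c : OpAtom 3) :
    OpMon.pc (triple a b c) = 1 + (OpAtom.pc a + OpAtom.pc b + OpAtom.pc c) := by
  simp [triple, OpMon.pc, OpAtomVec.pc]
  ring

theorem chainA_pc : ∀ j, OpAtom.pc (chainA j) = 0
  | 0 => rfl
  | j + 1 => by simp [chainA, single, OpAtom.pc, OpMon.pc, OpAtomVec.pc, chainA_pc j]

theorem wrap_pc : ∀ t (M : OpMon 3), OpMon.pc (wrap t M) = OpMon.pc M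
  | 0, M => rfl
  | t + 1, M => by simp [wrap, single, OpMon.pc, OpAtomVec.pc, OpAtom.pc, wrap_pc t M]

theorem enc_pc (t a b c : ℕ) : OpMon.pc (enc t a b c) = 1 := by
  simp [enc, wrap_pc, triple_pc, chainA_pc]

/-- Classification property of an atom. -/
def AtomP (A : OpAtom 3) : Prop :=
  (OpAtom.pc A = 0 → A = chainA A.mult) ∧
  (OpAtom.pc A = 1 → ∃ t a b c, A = .op (enc t a b c))

/-- Classification property of a vector of atoms. -/
def VecP : {k : ℕ} → OpAtomVec 3 k → Prop
  | _, .nil => True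
  | _, .cons a v => AtomP a ∧ VecP v

mutual
theorem atom_good : ∀ A : OpAtom 3, AtomP A
  | .star => by
    constructor
    · intro _; rfl
    · intro h; simp [OpAtom.pc] at h
  | .op m => by
    have hm := mon_good m
    constructor
    · intro h
      have := hm.1 h
      show OpAtom.op m = chainA (1 + m.mult)
      rw [add_comm]
      simp only [chainA]
      rw [← this]
    · intro h
      obtain ⟨t, a, b, c, rfl⟩ := hm.2 h
      exact ⟨t, a, b, c, rfl⟩

theorem vec_good : ∀ {k : ℕ} (v : OpAtomVec 3 k), VecP v
  | _, .nil => trivial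
  | _, .cons a v => ⟨atom_good a, vec_good v⟩

theorem mon_good : ∀ M : OpMon 3,
    (OpMon.pc M = 0 → M = single (chainA M.mult)) ∧
    (OpMon.pc M = 1 → ∃ t a b c, M = enc t a b c)
  | .mk k h1 h2 v => by
    have hv := vec_good v
    constructor
    · intro h
      simp only [OpMon.pc] at h
      have hk : k = 1 := by omega
      subst hk
      cases v with
      | cons a v' =>
        cases v' with
        | nil =>
          simp only [VecP] at hv
          have ha : OpAtom.pc a = 0 := by
            simp only [OpAtomVec.pc] at h; omega
          have := hv.1.1 ha
          simp only [OpMon.mult, OpAtomVec.mult, Nat.add_zero]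
          conv_lhs => rw [this]
          rfl
    · intro h
      simp only [OpMon.pc] at h
      rcases Nat.lt_or_ge k 3 with hk | hk
      · have hk1 : k = 1 := by omega
        subst hk1
        cases v with
        | cons a v' =>
          cases v' with
          | nil =>
            simp only [VecP] at hv
            have ha : OpAtom.pc a = 1 := by
              simp only [OpAtomVec.pc] at h; omega
            obtain ⟨t, x, y, z, rfl⟩ := hv.1.2 ha
            exact ⟨t + 1, x, y, z, rfl⟩
      · have hk3 : k = 3 := by omega
        subst hk3
        cases v with
        | cons a v2 =>
        cases v2 with
        | cons b v3 =>
        cases v3 with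
        | cons c v4 =>
        cases v4 with
        | nil =>
          simp only [VecP] at hv
          simp only [OpAtomVec.pc] at h
          have ha := hv.1.1 (by omega)
          have hb := hv.2.1.1 (by omega)
          have hc := hv.2.2.1.1 (by omega)
          refine ⟨0, a.mult, b.mult, c.mult, ?_⟩
          conv_lhs => rw [ha, hb, hc]
          rfl
end

theorem mon_pc1 (M : OpMon 3) (h : OpMon.pc M = 1) : ∃ t a b c, M = enc t a b c :=
  (mon_good M).2 h

end Stmt12

namespace Stmt12

theorem chainA_inj {j j' : ℕ} (h : chainA j = chainA j') : j = j' := by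
  have := congrArg OpAtom.mult h
  simpa [chainA_mult] using this

theorem enc_inj : ∀ (t t' a b c a' b' c' : ℕ), enc t a b c = enc t' a' b' c' →
    t = t' ∧ a = a' ∧ b = b' ∧ c = c'
  | 0, 0, a, b, c, a', b', c', h => by
    simp only [enc, wrap, triple, OpMon.mk.injEq, OpAtomVec.cons.injEq, heq_eq_eq,
      true_and] at h
    exact ⟨rfl, chainA_inj h.1, chainA_inj h.2.1, chainA_inj h.2.2.1⟩
  | 0, t' + 1, a, b, c, a', b', c', h => by
    simp only [enc, wrap, triple, single, OpMon.mk.injEq] at h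
    exact absurd h.1 (by decide)
  | t + 1, 0, a, b, c, a', b', c', h => by
    simp only [enc, wrap, triple, single, OpMon.mk.injEq] at h
    exact absurd h.1 (by decide)
  | t + 1, t' + 1, a, b, c, a', b', c', h => by
    simp only [enc, wrap, single, OpMon.mk.injEq, OpAtomVec.cons.injEq, OpAtom.op.injEq,
      heq_eq_eq, true_and] at h
    obtain ⟨rfl, rfl, rfl, rfl⟩ := enc_inj t t' a b c a' b' c' h.1
    exact ⟨rfl, rfl, rfl, rfl⟩

end Stmt12

open Stmt12

/-- For every integer `w ≥ 1`, the number of ternary (`n = 3`) operator monomials of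
weight `w` and multiplicity `w - 1` equals the tetrahedral number `C(w+2, 3)`. -/
theorem stmt_12 (w : ℕ) (hw : 1 ≤ w) :
    Nat.card {M : OpMon 3 | M.weight = w ∧ M.mult = w - 1} = Nat.choose (w + 2) 3 := by
  classical
  have key : ∀ M : OpMon 3, (M.weight = w ∧ M.mult = w - 1) ↔
      (OpMon.pc M = 1 ∧ M.mult = w - 1) := by
    intro M; have := mon_weight_eq M; omega
  let f : {P : Fin 4 → ℕ // ∑ i, P i = w - 1} →
      {M : OpMon 3 // M.weight = w ∧ M.mult = w - 1} :=
    fun P => ⟨enc (P.1 0) (P.1 1) (P.1 2) (P.1 3), by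
      have hs := P.2
      rw [Fin.sum_univ_four] at hs
      have h1 := enc_mult (P.1 0) (P.1 1) (P.1 2) (P.1 3)
      have h2 := enc_pc (P.1 0) (P.1 1) (P.1 2) (P.1 3)
      have h3 := mon_weight_eq (enc (P.1 0) (P.1 1) (P.1 2) (P.1 3))
      constructor <;> omega⟩
  have hbij : Function.Bijective f := by
    constructor
    · rintro ⟨P, hP⟩ ⟨Q, hQ⟩ h
      simp only [f, Subtype.mk.injEq] at h
      obtain ⟨h0, h1, h2, h3⟩ := enc_inj _ _ _ _ _ _ _ _ h
      apply Subtype.ext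
      funext i
      fin_cases i <;> assumption
    · rintro ⟨M, hM⟩
      obtain ⟨t, a, b, c, rfl⟩ := mon_pc1 M ((key M).1 hM).1
      have hm : t + a + b + c = w - 1 := by
        have := hM.2
        rwa [enc_mult] at this
      refine ⟨⟨![t, a, b, c], ?_⟩, ?_⟩
      · rw [Fin.sum_univ_four]
        simpa using hm
      · apply Subtype.ext
        simp only [f]
        norm_num
        rfl
  calc Nat.card {M : OpMon 3 | M.weight = w ∧ M.mult = w - 1}
      = Nat.card {P : Fin 4 → ℕ // ∑ i, P i = w - 1} :=
        Nat.card_congr (Equiv.ofBijective f hbij).symm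
    _ = Nat.card (Sym (Fin 4) (w - 1)) :=
        Nat.card_congr (Sym.equivNatSumOfFintype (Fin 4) (w - 1)).symm
    _ = Nat.multichoose 4 (w - 1) := by
        rw [Nat.card_eq_fintype_card, Sym.card_sym_eq_multichoose, Fintype.card_fin]
    _ = (w + 2).choose (w - 1) := by
        rw [Nat.multichoose_eq]
        congr 1
        omega
    _ = (w + 2).choose 3 := by
        have h3 : (w + 2) - (w - 1) = 3 := by omega
        rw [← h3, Nat.choose_symm (by omega)]
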